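/- For an n-qubit density matrix ρ, (1/4^n) ∑_{a,b ∈ {0,1}^n} X^a Z^b ρ Z^b X^a = I/2^n, where X^a = X^{a_1} ⊗ ⋯ ⊗ X^{a_n} and Z^b = Z^{b_1} ⊗ ⋯ ⊗ Z^{b_n}. -/

import Mathlib

open Matrix
open scoped ComplexOrder

/-- The Pauli `X` matrix. -/
noncomputable def pauliX : Matrix (Fin 2) (Fin 2) ℂ := !![0, 1; 1, 0]

/-- The Pauli `Z` matrix. -/
noncomputable def pauliZ : Matrix (Fin 2) (Fin 2) ℂ := !![1, 0; 0, -1]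

/-- `X^a = X^{a_1} ⊗ ⋯ ⊗ X^{a_n}` for a bit string `a`. -/
noncomputable def Xstring {n : ℕ} (a : Fin n → Fin 2) :
    Matrix (Fin n → Fin 2) (Fin n → Fin 2) ℂ :=
  fun x y => ∏ i, (pauliX ^ ((a i : ℕ))) (x i) (y i)

/-- `Z^b = Z^{b_1} ⊗ ⋯ ⊗ Z^{b_n}` for a bit string `b`. -/
noncomputable def Zstring {n : ℕ} (b : Fin n → Fin 2) :
    Matrix (Fin n → Fin 2) (Fin n → Fin 2) ℂ :=
  fun x y => ∏ i, (pauliZ ^ ((b i : ℕ))) (x i) (y i)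

lemma pauliX_pow_apply (c x y : Fin 2) :
    (pauliX ^ (c:ℕ)) x y = if y = x + c then 1 else 0 := by
  fin_cases c <;> fin_cases x <;> fin_cases y <;> simp [pauliX, Matrix.one_apply]

lemma pauliZ_pow_apply (c x y : Fin 2) :
    (pauliZ ^ (c:ℕ)) x y = if y = x then (-1:ℂ)^((c:ℕ)*(x:ℕ)) else 0 := by
  fin_cases c <;> fin_cases x <;> fin_cases y <;> simp [pauliZ, Matrix.one_apply]

noncomputable def eps {n : ℕ} (b x : Fin n → Fin 2) : ℂ :=
  ∏ i, (-1:ℂ)^((b i : ℕ) * (x i : ℕ))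

lemma Xstring_apply {n : ℕ} (a x y : Fin n → Fin 2) :
    Xstring a x y = if y = x + a then 1 else 0 := by
  simp only [Xstring, pauliX_pow_apply]
  by_cases h : y = x + a
  · subst h; simp [Pi.add_apply]
  · have : ∃ i, y i ≠ x i + a i := by
      by_contra hc
      push_neg at hc
      exact h (funext hc)
    obtain ⟨i, hi⟩ := this
    rw [if_neg h]
    exact Finset.prod_eq_zero (Finset.mem_univ i) (by simp [hi])

lemma Zstring_apply {n : ℕ} (b x y : Fin n → Fin 2) :
    Zstring b x y = if y = x then eps b x else 0 := by
  simp only [Zstring, pauliZ_pow_apply]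
  by_cases h : y = x
  · subst h; simp [eps]
  · have : ∃ i, y i ≠ x i := by
      by_contra hc; push_neg at hc; exact h (funext hc)
    obtain ⟨i, hi⟩ := this
    rw [if_neg h]
    exact Finset.prod_eq_zero (Finset.mem_univ i) (by simp [hi])

lemma add_add_self {n : ℕ} (u a : Fin n → Fin 2) : u + a + a = u := by
  funext i
  have : ∀ c d : Fin 2, c + d + d = c := by decide
  exact this (u i) (a i)

lemma entry_eq {n : ℕ} (ρ : Matrix (Fin n → Fin 2) (Fin n → Fin 2) ℂ)
    (a b x y : Fin n → Fin 2) :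
    (Xstring a * Zstring b * ρ * Zstring b * Xstring a) x y
      = eps b (x + a) * ρ (x + a) (y + a) * eps b (y + a) := by
  have hX : ∀ (M : Matrix (Fin n → Fin 2) (Fin n → Fin 2) ℂ) x y,
      (Xstring a * M) x y = M (x + a) y := by
    intro M x y
    rw [Matrix.mul_apply]
    simp only [Xstring_apply, ite_mul, one_mul, zero_mul]
    simp
  have hX' : ∀ (M : Matrix (Fin n → Fin 2) (Fin n → Fin 2) ℂ) x y,
      (M * Xstring a) x y = M x (y + a) := by
    intro M x y
    rw [Matrix.mul_apply]
    have : ∀ z : Fin n → Fin 2, (y = z + a) ↔ (z = y + a) := by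
      intro z
      constructor
      · rintro rfl; rw [add_add_self]
      · rintro rfl; rw [add_add_self]
    simp only [Xstring_apply, this, mul_ite, mul_one, mul_zero]
    simp
  have hZ : ∀ (M : Matrix (Fin n → Fin 2) (Fin n → Fin 2) ℂ) x y,
      (Zstring b * M) x y = eps b x * M x y := by
    intro M x y
    rw [Matrix.mul_apply]
    simp only [Zstring_apply, ite_mul, zero_mul]
    simp
  have hZ' : ∀ (M : Matrix (Fin n → Fin 2) (Fin n → Fin 2) ℂ) x y,
      (M * Zstring b) x y = M x y * eps b y := by
    intro M x y
    rw [Matrix.mul_apply]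
    simp only [Zstring_apply, mul_ite, mul_zero]
    simp
  rw [hX', hZ', mul_assoc, hX, hZ]


lemma eps_orth {n : ℕ} (u v : Fin n → Fin 2) :
    ∑ b : Fin n → Fin 2, eps b u * eps b v = if u = v then (2:ℂ)^n else 0 := by
  have key : ∑ b : Fin n → Fin 2, eps b u * eps b v
      = ∏ i, ∑ c : Fin 2, (-1:ℂ)^((c:ℕ)*(u i:ℕ)) * (-1:ℂ)^((c:ℕ)*(v i:ℕ)) := by
    rw [Fintype.prod_sum]
    apply Finset.sum_congr rfl
    intro b _
    rw [eps, eps, ← Finset.prod_mul_distrib]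
  rw [key]
  have single : ∀ w z : Fin 2,
      (∑ c : Fin 2, (-1:ℂ)^((c:ℕ)*(w:ℕ)) * (-1:ℂ)^((c:ℕ)*(z:ℕ)))
        = if w = z then 2 else 0 := by
    intro w z
    fin_cases w <;> fin_cases z <;> simp [Fin.sum_univ_succ] <;> norm_num
  simp only [single]
  by_cases h : u = v
  · subst h; simp
  · have : ∃ i, u i ≠ v i := by
      by_contra hc; push_neg at hc; exact h (funext hc)
    obtain ⟨i, hi⟩ := this
    rw [if_neg h]
    exact Finset.prod_eq_zero (Finset.mem_univ i) (by simp [hi])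

/-- Perfect security of the `n`-qubit quantum one-time pad:
`(1/4^n) ∑_{a,b ∈ {0,1}^n} X^a Z^b ρ Z^b X^a = I/2^n` for every density matrix `ρ`. -/
theorem qotp_n_qubits {n : ℕ} (ρ : Matrix (Fin n → Fin 2) (Fin n → Fin 2) ℂ)
    (hρ : ρ.PosSemidef) (hρ1 : ρ.trace = 1) :
    ((1 : ℂ) / 4 ^ n) • ∑ a : Fin n → Fin 2, ∑ b : Fin n → Fin 2,
        Xstring a * Zstring b * ρ * Zstring b * Xstring a
      = ((1 : ℂ) / 2 ^ n) • (1 : Matrix (Fin n → Fin 2) (Fin n → Fin 2) ℂ) := by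
  ext x y
  simp only [Matrix.smul_apply, Matrix.sum_apply, Matrix.one_apply, smul_eq_mul]
  have step1 : ∀ a : Fin n → Fin 2,
      ∑ b : Fin n → Fin 2,
        (Xstring a * Zstring b * ρ * Zstring b * Xstring a) x y
        = (if x = y then (2:ℂ)^n else 0) * ρ (x + a) (y + a) := by
    intro a
    have : ∀ b : Fin n → Fin 2,
        (Xstring a * Zstring b * ρ * Zstring b * Xstring a) x y
          = (eps b (x + a) * eps b (y + a)) * ρ (x + a) (y + a) := by
      intro b; rw [entry_eq]; ring
    rw [Finset.sum_congr rfl (fun b _ => this b), ← Finset.sum_mul, eps_orth]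
    congr 1
    by_cases h : x = y
    · subst h; simp
    · rw [if_neg h, if_neg (fun hc => h (add_right_cancel hc))]
  rw [Finset.sum_congr rfl (fun a _ => step1 a)]
  by_cases h : x = y
  · subst h
    simp only [if_pos rfl, ← Finset.mul_sum]
    have : ∑ a : Fin n → Fin 2, ρ (x + a) (x + a) = ρ.trace := by
      rw [Matrix.trace]
      exact Fintype.sum_bijective (fun a => x + a)
        (Group.mulLeft_bijective (G := Multiplicative (Fin n → Fin 2)) x)
        _ _ (fun a => rfl)
    rw [this, hρ1]
    rw [show ((4:ℂ))^n = (2:ℂ)^n * (2:ℂ)^n by rw [← mul_pow]; norm_num]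
    field_simp
    simp
  · simp [h]
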